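/- Let ⟨S,R⟩ be a set of terms with restricted regular constraints and let s ∈ S satisfy the infinite-instances property in ⟨S,R⟩. Then L(⟨S,R⟩) is not a regular term language. -/

import Mathlib

namespace RITRC

/-- Terms over a signature (symbols `F` with arities `ar`) with variables in `V`. -/
inductive Term (F : Type) (ar : F → ℕ) (V : Type) : Type where
  | var : V → Term F ar V
  | app : (f : F) → (Fin (ar f) → Term F ar V) → Term F ar V

/-- Ground terms (terms without variables). -/
abbrev GTerm (F : Type) (ar : F → ℕ) : Type := Term F ar Empty

variable {F V V' Q : Type} {ar : F → ℕ}

/-- Applying a substitution to a term. -/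
def Term.subst (φ : V → Term F ar V') : Term F ar V → Term F ar V'
  | .var x => φ x
  | .app f ts => .app f (fun i => (ts i).subst φ)

/-- The height of a term. -/
def Term.height : Term F ar V → ℕ
  | .var _ => 0
  | .app _ ts => Finset.univ.sup (fun i => (ts i).height + 1)

/-- The size of a term. -/
def Term.size : Term F ar V → ℕ
  | .var _ => 1
  | .app _ ts => 1 + ∑ i, (ts i).size

/-- The subterm of a term at a position (a list of child indices), if it exists. -/
def Term.sub : Term F ar V → List ℕ → Option (Term F ar V)
  | t, [] => some t
  | .var _, _ :: _ => none
  | .app f ts, i :: p => if h : i < ar f then (ts ⟨i, h⟩).sub p else none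

/-- The root symbol of a term: a function symbol or a variable. -/
def Term.rootSym : Term F ar V → F ⊕ V
  | .var x => .inr x
  | .app f _ => .inl f

/-- `p` is a position of `t`. -/
def Term.isPos (t : Term F ar V) (p : List ℕ) : Prop := t.sub p ≠ none

/-- `p` is a variable position of `t`. -/
def Term.isVarPos (t : Term F ar V) (p : List ℕ) : Prop :=
  ∃ x, t.sub p = some (Term.var x)

/-- `p` is a non-variable position of `t`. -/
def Term.isNonVarPos (t : Term F ar V) (p : List ℕ) : Prop :=
  ∃ f ts, t.sub p = some (Term.app f ts)

/-- The variable `x` occurs in `t`. -/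
def Term.varOccurs (t : Term F ar V) (x : V) : Prop :=
  ∃ p, t.sub p = some (Term.var x)

/-- The variable `x` occurs at least twice in `t`. -/
def Term.occursTwice (t : Term F ar V) (x : V) : Prop :=
  ∃ p q, p ≠ q ∧ t.sub p = some (Term.var x) ∧ t.sub q = some (Term.var x)

/-- `t` is determined at position `p`: either `p` is a non-variable position
of `t`, or some prefix of `p` is labeled by a constant symbol. -/
def Term.determinedAt (t : Term F ar V) (p : List ℕ) : Prop :=
  t.isNonVarPos p ∨ ∃ p', p' <+: p ∧ ∃ f ts, t.sub p' = some (Term.app f ts) ∧ ar f = 0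

/-- A deterministic tree automaton: at most one transition `f(q₁,…,qₖ) → q`
for every `f` and states `q₁,…,qₖ`. -/
structure DTA (F : Type) (ar : F → ℕ) (Q : Type) : Type where
  δ : (f : F) → (Fin (ar f) → Q) → Option Q

/-- Collect a family of optional values into an optional family. -/
def allSome {n : ℕ} {α : Type} (g : Fin n → Option α) : Option (Fin n → α) :=
  if h : ∀ i, (g i).isSome then some (fun i => (g i).get (h i)) else none

/-- The state reached by `A` on a term, where variables are pre-assigned states by `C`. -/
def DTA.runC (A : DTA F ar Q) (C : V → Q) : Term F ar V → Option Q
  | .var x => some (C x)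
  | .app f ts => (allSome (fun i => A.runC C (ts i))).bind (A.δ f)

/-- The state reached by `A` on a ground term. -/
def DTA.run (A : DTA F ar Q) : GTerm F ar → Option Q :=
  A.runC (fun x => x.elim)

/-- `L(A,q)`: the set of ground terms on which `A` reaches state `q`. -/
def DTA.lang (A : DTA F ar Q) (q : Q) : Set (GTerm F ar) :=
  {t | A.run t = some q}

/-- `A` is complete. -/
def DTA.Complete (A : DTA F ar Q) : Prop :=
  ∀ (f : F) (qs : Fin (ar f) → Q), (A.δ f qs).isSome

/-- `A` is a 1-or-n DTA: each state has exactly one, or at least `n`, terms. -/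
def DTA.OneOr (A : DTA F ar Q) (n : ℕ) : Prop :=
  ∀ q : Q, (A.lang q).encard = 1 ∨ (n : ℕ∞) ≤ (A.lang q).encard

/-- The number of transitions of a DTA. -/
noncomputable def DTA.numTrans [Fintype F] [Fintype Q] (A : DTA F ar Q) : ℕ :=
  ∑ f : F, ∑ qs : Fin (ar f) → Q, if (A.δ f qs).isSome then 1 else 0

/-- A set of ground terms is regular if it is recognized by some (finite) DTA. -/
def IsRegular (L : Set (GTerm F ar)) : Prop :=
  ∃ (Q : Type) (_ : Fintype Q) (A : DTA F ar Q) (Facc : Set Q),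
    L = {t | ∃ q ∈ Facc, A.run t = some q}

/-- A DTA bundled with its (finite) state type and accepting states. -/
structure NDTA (F : Type) (ar : F → ℕ) : Type 1 where
  Q : Type
  fin : Fintype Q
  A : DTA F ar Q
  acc : Set Q

/-- The language recognized by a bundled DTA. -/
def NDTA.lang (N : NDTA F ar) : Set (GTerm F ar) :=
  {t | ∃ q ∈ N.acc, N.A.run t = some q}

/-- The size of a bundled DTA: number of states plus sum of sizes of transitions. -/
noncomputable def NDTA.size [Fintype F] (N : NDTA F ar) : ℕ :=
  letI := N.fin
  Fintype.card N.Q +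
    ∑ f : F, ∑ qs : Fin (ar f) → N.Q, if (N.A.δ f qs).isSome then ar f + 2 else 0

/-- `L(⟨S,M⟩)`: the language of a set of terms `S` with regular constraints `M`. -/
def langM (S : Set (Term F ar V)) (M : V → NDTA F ar) : Set (GTerm F ar) :=
  {t | ∃ s ∈ S, ∃ φ : V → GTerm F ar, (∀ x, φ x ∈ (M x).lang) ∧ t = s.subst φ}

/-- `L(⟨S,R⟩)` for a single regular constraint `R = ⟨A,C⟩`. -/
def langSingle (S : Set (Term F ar V)) (A : DTA F ar Q) (C : V → Q) :
    Set (GTerm F ar) :=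
  {t | ∃ s ∈ S, ∃ φ : V → GTerm F ar, (∀ x, A.run (φ x) = some (C x)) ∧ t = s.subst φ}

/-- A restricted regular constraint `R = ⟨A,V,C,W,h⟩`. -/
structure RRC (F : Type) (ar : F → ℕ) (V Q : Type) : Type where
  A : DTA F ar Q
  C : V → Q
  W : Set V
  hgt : ℕ

/-- A solution of a restricted regular constraint. -/
def RRC.IsSolution (R : RRC F ar V Q) (φ : V → GTerm F ar) : Prop :=
  (∀ x, R.A.run (φ x) = some (R.C x)) ∧ ∀ x ∈ R.W, (φ x).height ≤ R.hgt

/-- `L(⟨S,R⟩)` for a restricted regular constraint `R`. -/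
def RRC.lang (R : RRC F ar V Q) (S : Set (Term F ar V)) : Set (GTerm F ar) :=
  {t | ∃ s ∈ S, ∃ φ, R.IsSolution φ ∧ t = s.subst φ}

/-- Renaming the variables of a term. -/
def Term.rename (ρ : V → V') (t : Term F ar V) : Term F ar V' :=
  t.subst (fun x => Term.var (ρ x))

/-- `s` and `t` are structurally similar: `t` is obtained from `s` by an
injective variable renaming. -/
def StructSim (s : Term F ar V) (t : Term F ar V') : Prop :=
  ∃ ρ : V → V', Function.Injective ρ ∧ t = s.rename ρ

/-- `s` and `t` are structurally equal with respect to the state assignment `C`. -/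
def StructEq (C : V → Q) (s t : Term F ar V) : Prop :=
  StructSim s t ∧
    ∀ p x y, s.sub p = some (Term.var x) → t.sub p = some (Term.var y) → C x = C y

/-- `s` is structurally subsumed by `t` (with respect to `A` and `C`). -/
def StructSub (A : DTA F ar Q) (C : V → Q) (s t : Term F ar V) : Prop :=
  (∀ p f ts, t.sub p = some (Term.app f ts) →
    ∃ sp, s.sub p = some sp ∧ sp.rootSym = Sum.inl f) ∧
  (∀ p tp, t.sub p = some tp → ∃ sp, s.sub p = some sp ∧ A.runC C tp = A.runC C sp)

/-- Building a binary term `f(t,u)` from a symbol of arity 2. -/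
def mkBin {f : F} (h : ar f = 2) (t u : Term F ar V) : Term F ar V :=
  Term.app f (fun i => if (i : ℕ) = 0 then t else u)

/-- `s` satisfies the infinite-instances property in `⟨S,R⟩`. -/
def InfiniteInstances (R : RRC F ar V Q) (S : Set (Term F ar V)) (s : Term F ar V) :
    Prop :=
  ∃ x, s.occursTwice x ∧
    ∃ φ : ℕ → (V → GTerm F ar),
      (∀ i, R.IsSolution (φ i)) ∧
      (∀ i, s.subst (φ i) ∉ R.lang (S \ {s})) ∧
      (∀ i j, i ≠ j → φ i x ≠ φ j x)

/-- The set of prefixes of a finite set of positions. -/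
def prefixes (P : Finset (List ℕ)) : Finset (List ℕ) :=
  P.biUnion (fun p => p.inits.toFinset)


-- ====================== NEW MATERIAL ======================

/-- Replace the subterm at position `p` (no-op on invalid positions). -/
def Term.repl : Term F ar V → List ℕ → Term F ar V → Term F ar V
  | _, [], v => v
  | .var x, _ :: _, _ => .var x
  | .app f ts, i :: p, v =>
      if h : i < ar f then
        .app f (fun k => if k = ⟨i, h⟩ then (ts k).repl p v else ts k)
      else .app f ts

@[simp] lemma Term.repl_nil (t v : Term F ar V) : t.repl [] v = v := by
  cases t <;> rfl

lemma Term.sub_append (t : Term F ar V) (p q : List ℕ) :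
    t.sub (p ++ q) = (t.sub p).bind (fun w => w.sub q) := by
  induction p generalizing t with
  | nil => simp [Term.sub]
  | cons i p ih =>
    cases t with
    | var x => simp [Term.sub]
    | app f ts =>
      simp only [List.cons_append, Term.sub]
      split
      · exact ih _
      · simp

lemma Term.subst_sub {φ : V → Term F ar V'} :
    ∀ (p : List ℕ) (s sp : Term F ar V), s.sub p = some sp →
      (s.subst φ).sub p = some (sp.subst φ) := by
  intro p
  induction p with
  | nil => intro s sp h; simp [Term.sub] at h ⊢; exact congrArg _ h
  | cons i p ih =>
    intro s sp h
    cases s with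
    | var x => simp [Term.sub] at h
    | app f ts =>
      simp only [Term.sub, Term.subst] at h ⊢
      split at h
      · next hi => simpa only [dif_pos hi] using ih _ _ h
      · exact absurd h (by simp)

lemma Term.classify {φ : V → Term F ar V'} :
    ∀ (p : List ℕ) (s : Term F ar V), (s.subst φ).sub p ≠ none →
      (∃ f ts, s.sub p = some (Term.app f ts)) ∨
      (∃ p₀ x r, p₀ ++ r = p ∧ s.sub p₀ = some (Term.var x)) := by
  intro p
  induction p with
  | nil =>
    intro s _
    cases s with
    | var x => exact Or.inr ⟨[], x, [], rfl, rfl⟩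
    | app f ts => exact Or.inl ⟨f, ts, rfl⟩
  | cons i p ih =>
    intro s h
    cases s with
    | var x => exact Or.inr ⟨[], x, i :: p, rfl, rfl⟩
    | app f ts =>
      simp only [Term.subst, Term.sub] at h ⊢
      split at h
      · next hi =>
        rcases ih _ h with ⟨f', ts', h'⟩ | ⟨p₀, x, r, hpr, h'⟩
        · exact Or.inl ⟨f', ts', by simp only [dif_pos hi]; exact h'⟩
        · exact Or.inr ⟨i :: p₀, x, r, by rw [← hpr]; rfl,
            by simp only [Term.sub, dif_pos hi]; exact h'⟩
      · exact absurd h (by simp)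

lemma Term.sub_repl : ∀ (p : List ℕ) (t w v : Term F ar V), t.sub p = some w →
    (t.repl p v).sub p = some v := by
  intro p
  induction p with
  | nil => intro t w v _; simp [Term.sub]
  | cons i p ih =>
    intro t w v h
    cases t with
    | var x => simp [Term.sub] at h
    | app f ts =>
      simp only [Term.sub, Term.repl] at h ⊢
      split at h
      · next hi => simp only [dif_pos hi, Term.sub, dif_pos hi, if_pos rfl]; exact ih _ w v h
      · exact absurd h (by simp)

lemma Term.repl_sub_of_incomp : ∀ (p q : List ℕ) (t v : Term F ar V),
    ¬ p <+: q → ¬ q <+: p → (t.repl p v).sub q = t.sub q := by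
  intro p
  induction p with
  | nil => intro q t v hpq _; exact absurd (List.nil_prefix) hpq
  | cons i p ih =>
    intro q t v hpq hqp
    cases q with
    | nil => exact absurd (List.nil_prefix) hqp
    | cons j q =>
      cases t with
      | var x => rfl
      | app f ts =>
        simp only [Term.repl]
        split
        · next hi =>
          simp only [Term.sub]
          split
          · next hj =>
            by_cases hij : (⟨j, hj⟩ : Fin (ar f)) = ⟨i, hi⟩
            · have hji : j = i := by injection hij
              subst hji
              rw [if_pos hij]
              exact ih q _ v (fun hp => hpq (by simpa [List.cons_prefix_cons] using hp))
                (fun hp => hqp (by simpa [List.cons_prefix_cons] using hp))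
            · rw [if_neg hij]
          · rfl
        · rfl

lemma Term.repl_append : ∀ (p : List ℕ) (t w : Term F ar V) (r : List ℕ) (v : Term F ar V),
    t.sub p = some w → t.repl (p ++ r) v = t.repl p (w.repl r v) := by
  intro p
  induction p with
  | nil => intro t w r v h; simp [Term.sub] at h; subst h; simp
  | cons i p ih =>
    intro t w r v h
    cases t with
    | var x => simp [Term.sub] at h
    | app f ts =>
      simp only [Term.sub] at h
      split at h
      · next hi =>
        simp only [List.cons_append, Term.repl, dif_pos hi]
        congr 1
        funext k
        by_cases hk : k = (⟨i, hi⟩ : Fin (ar f))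
        · rw [if_pos hk, if_pos hk, hk]; exact ih _ _ _ _ h
        · rw [if_neg hk, if_neg hk]
      · exact absurd h (by simp)

lemma Term.repl_self : ∀ (p : List ℕ) (t w : Term F ar V), t.sub p = some w →
    t.repl p w = t := by
  intro p
  induction p with
  | nil => intro t w h; simp [Term.sub] at h; rw [h]; simp
  | cons i p ih =>
    intro t w h
    cases t with
    | var x => simp [Term.sub] at h
    | app f ts =>
      simp only [Term.sub] at h
      split at h
      · next hi =>
        simp only [Term.repl, dif_pos hi]
        congr 1
        funext k
        by_cases hk : k = (⟨i, hi⟩ : Fin (ar f))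
        · rw [if_pos hk, hk, ih _ _ h]
        · rw [if_neg hk]
      · exact absurd h (by simp)

lemma Term.repl_repl : ∀ (p : List ℕ) (t v v' : Term F ar V),
    (t.repl p v).repl p v' = t.repl p v' := by
  intro p
  induction p with
  | nil => intro t v v'; simp
  | cons i p ih =>
    intro t v v'
    cases t with
    | var x => rfl
    | app f ts =>
      simp only [Term.repl]
      split
      · next hi =>
        simp only [Term.repl, dif_pos hi]
        congr 1
        funext k
        by_cases hk : k = (⟨i, hi⟩ : Fin (ar f))
        · rw [if_pos hk, if_pos hk, if_pos hk, ih]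
        · rw [if_neg hk, if_neg hk, if_neg hk]
      · next hi => simp only [Term.repl, dif_neg hi]

lemma allSome_congr {n : ℕ} {α : Type} {g g' : Fin n → Option α}
    (h : ∀ i, g i = g' i) : allSome g = allSome g' := by
  have : g = g' := funext h
  rw [this]

lemma DTA.runC_repl {A : DTA F ar Q} {C : V → Q} :
    ∀ (p : List ℕ) (t w v : Term F ar V), t.sub p = some w →
      A.runC C v = A.runC C w → A.runC C (t.repl p v) = A.runC C t := by
  intro p
  induction p with
  | nil => intro t w v h hr; simp [Term.sub] at h; rw [Term.repl, hr, h]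
  | cons i p ih =>
    intro t w v h hr
    cases t with
    | var x => simp [Term.sub] at h
    | app f ts =>
      simp only [Term.sub] at h
      split at h
      · next hi =>
        simp only [Term.repl, dif_pos hi, DTA.runC]
        congr 1
        apply allSome_congr
        intro k
        by_cases hk : k = (⟨i, hi⟩ : Fin (ar f))
        · rw [if_pos hk, hk]; exact ih _ _ _ h hr
        · rw [if_neg hk]
      · exact absurd h (by simp)

lemma Term.height_repl_le : ∀ (p : List ℕ) (t w v : Term F ar V), t.sub p = some w →
    v.height ≤ w.height → (t.repl p v).height ≤ t.height := by
  intro p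
  induction p with
  | nil => intro t w v h hv; simp [Term.sub] at h; rw [Term.repl]; exact h ▸ hv
  | cons i p ih =>
    intro t w v h hv
    cases t with
    | var x => simp [Term.sub] at h
    | app f ts =>
      simp only [Term.sub] at h
      split at h
      · next hi =>
        simp only [Term.repl, dif_pos hi, Term.height]
        apply Finset.sup_mono_fun
        intro k _
        by_cases hk : k = (⟨i, hi⟩ : Fin (ar f))
        · rw [if_pos hk, hk]
          exact Nat.succ_le_succ (ih _ _ _ h hv)
        · rw [if_neg hk]
      · exact absurd h (by simp)

lemma Term.subst_congr {ψ₁ ψ₂ : V → Term F ar V'} :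
    ∀ (t : Term F ar V), (∀ z ρ, t.sub ρ = some (Term.var z) → ψ₁ z = ψ₂ z) →
      t.subst ψ₁ = t.subst ψ₂ := by
  intro t
  induction t with
  | var x => intro h; exact h x [] rfl
  | app f ts ih =>
    intro h
    simp only [Term.subst]
    congr 1
    funext k
    apply ih k
    intro z ρ hz
    refine h z (k.val :: ρ) ?_
    simp only [Term.sub, dif_pos k.isLt]
    simpa only [Fin.eta] using hz

lemma Term.var_prefix : ∀ (q₀ p : List ℕ) (s : Term F ar V) (z : V) (w : Term F ar V),
    s.sub q₀ = some (Term.var z) → s.sub p = some w → q₀ <+: p → q₀ = p := by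
  intro q₀ p s z w h1 h2 hpre
  obtain ⟨r, hr⟩ := hpre
  subst hr
  rw [Term.sub_append, h1] at h2
  cases r with
  | nil => simp
  | cons a r => simp [Term.sub] at h2

lemma Term.subst_update {ψ : V → Term F ar V'} {v : Term F ar V'} {y : V} [DecidableEq V] :
    ∀ (p₀ : List ℕ) (s : Term F ar V), s.sub p₀ = some (Term.var y) →
      (∀ q₀, s.sub q₀ = some (Term.var y) → q₀ = p₀) →
      s.subst (Function.update ψ y v) = (s.subst ψ).repl p₀ v := by
  intro p₀
  induction p₀ with
  | nil =>
    intro s h _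
    simp [Term.sub] at h
    subst h
    simp [Term.subst, Term.repl, Function.update_self]
  | cons i p ih =>
    intro s h huniq
    cases s with
    | var x => simp [Term.sub] at h
    | app f ts =>
      simp only [Term.sub] at h
      split at h
      · next hi =>
        simp only [Term.subst, Term.repl, dif_pos hi]
        congr 1
        funext k
        by_cases hk : k = (⟨i, hi⟩ : Fin (ar f))
        · rw [if_pos hk, hk]
          apply ih _ h
          intro q₀ hq₀
          have := huniq (i :: q₀) (by simp only [Term.sub, dif_pos hi]; exact hq₀)
          injection this
        · rw [if_neg hk]
          apply Term.subst_congr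
          intro z ρ hz
          rcases eq_or_ne z y with rfl | hzy
          · exfalso
            have := huniq (k.val :: ρ) (by
              simp only [Term.sub, dif_pos k.isLt]
              simpa only [Fin.eta] using hz)
            have hkk : k.val = i := by injection this
            exact hk (by ext; exact hkk)
          · rw [Function.update_of_ne hzy]
      · exact absurd h (by simp)

lemma Term.subst_eq_repl {ψ ψ' : V → Term F ar V'} :
    ∀ (p : List ℕ) (s w : Term F ar V), s.sub p = some w →
      (∀ z, ψ' z ≠ ψ z → ∀ q₀, s.sub q₀ = some (Term.var z) → p <+: q₀) →
      s.subst ψ' = (s.subst ψ).repl p (w.subst ψ') := by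
  intro p
  induction p with
  | nil => intro s w h _; simp [Term.sub] at h; subst h; simp
  | cons i p ih =>
    intro s w h hocc
    cases s with
    | var x =>
      exfalso
      simp [Term.sub] at h
    | app f ts =>
      simp only [Term.sub] at h
      split at h
      · next hi =>
        simp only [Term.subst, Term.repl, dif_pos hi]
        congr 1
        funext k
        by_cases hk : k = (⟨i, hi⟩ : Fin (ar f))
        · rw [if_pos hk, hk]
          apply ih _ _ h
          intro z hz q₀ hq₀
          have := hocc z hz (i :: q₀) (by simp only [Term.sub, dif_pos hi]; exact hq₀)
          rw [List.cons_prefix_cons] at this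
          exact this.2
        · rw [if_neg hk]
          apply Term.subst_congr
          intro z ρ hz
          by_contra hne
          have := hocc z hne (k.val :: ρ) (by
            simp only [Term.sub, dif_pos k.isLt]
            simpa only [Fin.eta] using hz)
          rw [List.cons_prefix_cons] at this
          exact hk (by ext; exact this.1.symm)
      · exact absurd h (by simp)


lemma DTA.run_repl (A : DTA F ar Q) (p : List ℕ)
    (t w v : GTerm F ar) (h : t.sub p = some w) (hr : A.run v = A.run w) :
    A.run (t.repl p v) = A.run t :=
  DTA.runC_repl p t w v h hr

lemma exists_constant_freq {C : Type} [Finite C] (v : ℕ → C) :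
    ∃ c, ∀ N, ∃ n, N ≤ n ∧ v n = c := by
  by_contra h
  push_neg at h
  choose Nc hNc using h
  cases nonempty_fintype C
  exact hNc (v (Finset.univ.sup Nc)) (Finset.univ.sup Nc)
    (Finset.le_sup (Finset.mem_univ _)) rfl

lemma exists_strictmono_subseq {C : Type} (v : ℕ → C) (c : C)
    (h : ∀ N, ∃ n, N ≤ n ∧ v n = c) :
    ∃ e : ℕ → ℕ, StrictMono e ∧ ∀ k, v (e k) = c := by
  classical
  let e : ℕ → ℕ := fun k => Nat.rec (h 0).choose (fun _ prev => (h (prev + 1)).choose) k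
  have hsucc : ∀ k, e (k + 1) = (h (e k + 1)).choose := fun k => rfl
  have he : ∀ k, v (e k) = c := by
    intro k
    cases k with
    | zero => exact (h 0).choose_spec.2
    | succ k => rw [hsucc]; exact (h (e k + 1)).choose_spec.2
  refine ⟨e, strictMono_nat_of_lt_succ (fun k => ?_), he⟩
  have := (h (e k + 1)).choose_spec.1
  rw [hsucc]
  omega

theorem ramsey_pairs {C : Type} [Finite C] (f : ℕ → ℕ → C) :
    ∃ g : ℕ → ℕ, StrictMono g ∧ ∃ c, ∀ i j, i < j → f (g i) (g j) = c := by
  classical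
  have step : ∀ σ : {g : ℕ → ℕ // StrictMono g},
      ∃ (c : C) (σ' : {g : ℕ → ℕ // StrictMono g}),
        (∀ m, f (σ.1 0) (σ'.1 m) = c) ∧ (∀ m, ∃ k, σ'.1 m = σ.1 (k + 1)) := by
    intro σ
    obtain ⟨c, hc⟩ := exists_constant_freq (fun m => f (σ.1 0) (σ.1 (m + 1)))
    obtain ⟨e, he, hec⟩ := exists_strictmono_subseq _ c hc
    exact ⟨c, ⟨fun m => σ.1 (e m + 1),
      fun u w huw => σ.2 (Nat.succ_lt_succ (he huw))⟩,
      fun m => hec m, fun m => ⟨e m, rfl⟩⟩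
  choose stepc stepσ hstep1 hstep2 using step
  let ch : ℕ → {g : ℕ → ℕ // StrictMono g} :=
    fun n => Nat.rec ⟨id, strictMono_id⟩ (fun _ s => stepσ s) n
  have hch_succ : ∀ n, ch (n + 1) = stepσ (ch n) := fun n => rfl
  let a : ℕ → ℕ := fun n => (ch n).1 0
  let col : ℕ → C := fun n => stepc (ch n)
  have hB : ∀ n d m, ∃ m', (ch (n + 1 + d)).1 m = (ch (n + 1)).1 m' := by
    intro n d
    induction d with
    | zero => intro m; exact ⟨m, rfl⟩
    | succ d ih =>
      intro m
      have h1 : n + 1 + (d + 1) = (n + 1 + d) + 1 := by omega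
      rw [h1, hch_succ]
      obtain ⟨k, hk⟩ := hstep2 (ch (n + 1 + d)) m
      rw [hk]
      exact ih (k + 1)
  have hC : ∀ n m, n < m → f (a n) (a m) = col n := by
    intro n m hnm
    obtain ⟨d, rfl⟩ : ∃ d, m = n + 1 + d := ⟨m - n - 1, by omega⟩
    obtain ⟨m', hm'⟩ := hB n d 0
    show f ((ch n).1 0) ((ch (n + 1 + d)).1 0) = stepc (ch n)
    rw [hm', hch_succ]
    exact hstep1 (ch n) m'
  have hD : StrictMono a := by
    apply strictMono_nat_of_lt_succ
    intro n
    obtain ⟨k, hk⟩ := hstep2 (ch n) 0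
    show (ch n).1 0 < (ch (n + 1)).1 0
    rw [hch_succ, hk]
    exact (ch n).2 (Nat.succ_pos k)
  obtain ⟨c, hc⟩ := exists_constant_freq col
  obtain ⟨e, he, hec⟩ := exists_strictmono_subseq col c hc
  refine ⟨a ∘ e, hD.comp he, c, fun i j hij => ?_⟩
  rw [Function.comp_apply, Function.comp_apply, hC (e i) (e j) (he hij), hec]


/-- if some `s ∈ S` satisfies the infinite-instances property in
`⟨S,R⟩`, then `L(⟨S,R⟩)` is not regular. -/
theorem not_regular_of_infiniteInstances {F V Q : Type} {ar : F → ℕ}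
    [Fintype F] [Fintype Q] [Fintype V]
    (R : RRC F ar V Q) (S : Finset (Term F ar V)) (s : Term F ar V)
    (hs : s ∈ S) (hinf : InfiniteInstances R (↑S) s) :
    ¬ IsRegular (R.lang ↑S) := by
  classical
  obtain ⟨x, ⟨p, q, hpq, hsp, hsq⟩, φ, hsol, hnotin, hdist⟩ := hinf
  rintro ⟨Q', _instQ', B, Facc, hL⟩
  -- basic notation
  have hsmem : s ∈ (↑S : Set (Term F ar V)) := Finset.mem_coe.mpr hs
  -- instances of s
  have htmem : ∀ i, Term.subst (φ i) s ∈ R.lang ↑S :=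
    fun i => ⟨s, hsmem, φ i, hsol i, rfl⟩
  have htp : ∀ i, (Term.subst (φ i) s).sub p = some (φ i x) :=
    fun i => Term.subst_sub p s _ hsp
  have htq : ∀ i, (Term.subst (φ i) s).sub q = some (φ i x) :=
    fun i => Term.subst_sub q s _ hsq
  -- p and q are incomparable
  have hppq : ¬ p <+: q := fun hpre => hpq (Term.var_prefix p q s x _ hsp hsq hpre)
  have hpqp : ¬ q <+: p := fun hpre => (hpq (Term.var_prefix q p s x _ hsq hsp hpre).symm)
  have hAu : ∀ i, R.A.run (φ i x) = some (R.C x) := fun i => (hsol i).1 x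
  -- the mixed terms
  set T : ℕ → ℕ → GTerm F ar := fun i j => (Term.subst (φ i) s).repl p (φ j x) with hT
  have hTsubp : ∀ i j, (T i j).sub p = some (φ j x) :=
    fun i j => Term.sub_repl p _ _ _ (htp i)
  have hTsubq : ∀ i j, (T i j).sub q = some (φ i x) := by
    intro i j
    have : (T i j).sub q = (Term.subst (φ i) s).sub q :=
      Term.repl_sub_of_incomp p q _ _ hppq hpqp
    rw [this]; exact htq i
  -- mixed terms are in L
  have hTL : ∀ i j, B.run (φ j x) = B.run (φ i x) → T i j ∈ R.lang ↑S := by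
    intro i j hru
    have hmem := htmem i
    rw [hL] at hmem
    obtain ⟨qa, hqa, hrun⟩ := hmem
    rw [hL]
    exact ⟨qa, hqa, by rw [DTA.run_repl B p _ _ _ (htp i) hru]; exact hrun⟩
  -- mixed terms are not instances of s
  set P : ℕ → ℕ → Prop := fun i j => T i j ∈ R.lang ((↑S : Set (Term F ar V)) \ {s}) with hPdef
  have hPnotS : ∀ i j, φ i x ≠ φ j x → T i j ∈ R.lang ↑S → P i j := by
    intro i j hne hmem
    obtain ⟨s₂, hs₂, ψ, hψ, hEq⟩ := hmem
    by_cases h2 : s₂ = s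
    · exfalso
      subst h2
      have h1 : (T i j).sub p = some (ψ x) := by rw [hEq]; exact Term.subst_sub p s₂ _ hsp
      have h2 : (T i j).sub q = some (ψ x) := by rw [hEq]; exact Term.subst_sub q s₂ _ hsq
      rw [hTsubp i j] at h1
      rw [hTsubq i j] at h2
      apply hne
      rw [← Option.some_inj, h2, ← h1]
    · exact ⟨s₂, ⟨hs₂, h2⟩, ψ, hψ, hEq⟩
  -- extraction of witnesses with case data
  have ext : ∀ i j, P i j → ∃ (d : (↥S) × Option (Fin (p.length + 1)))
      (ψ : V → GTerm F ar),
      (d.1.val ≠ s) ∧ R.IsSolution ψ ∧ T i j = Term.subst ψ d.1.val ∧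
      (d.2 = none → ∃ f ts, d.1.val.sub p = some (Term.app f ts)) ∧
      (∀ k, d.2 = some k → ∃ x', d.1.val.sub (p.take k.val) = some (Term.var x')) := by
    intro i j h
    obtain ⟨s', hs', ψ, hψ, hEq⟩ := h
    have hnn : (Term.subst ψ s').sub p ≠ none := by
      rw [← hEq, hTsubp i j]; simp
    have hS' : s' ∈ S := Finset.mem_coe.mp hs'.1
    have hne : s' ≠ s := hs'.2
    rcases Term.classify p s' hnn with ⟨f, ts, hw⟩ | ⟨p₀, x', r, hpr, hv⟩
    · exact ⟨(⟨s', hS'⟩, none), ψ, hne, hψ, hEq,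
        fun _ => ⟨f, ts, hw⟩, fun k hk => by simp at hk⟩
    · have hlen : p₀.length < p.length + 1 := by
        rw [← hpr]; simp only [List.length_append]; omega
      refine ⟨(⟨s', hS'⟩, some ⟨p₀.length, hlen⟩), ψ, hne, hψ, hEq,
        fun hnone => by simp at hnone, fun k hk => ⟨x', ?_⟩⟩
      have hkk : k = ⟨p₀.length, hlen⟩ := by
        rw [Option.some_inj] at hk; exact hk.symm
      subst hkk
      have : p.take p₀.length = p₀ := by rw [← hpr]; exact List.take_left (l₁ := p₀) (l₂ := r)
      rw [this]
      exact hv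
  choose dat' eψ hdne hdsol hdeq hdcase1 hdcase2 using ext
  set dat : ℕ → ℕ → (↥S) × Option (Fin (p.length + 1)) :=
    fun i j => if h : P i j then dat' i j h else (⟨s, hs⟩, none) with hdat
  have hdats : ∀ i j (h : P i j), dat i j = dat' i j h := fun i j h => dif_pos h
  -- the coloring
  set colf : ℕ → ℕ → (Option Q' × Option Q') × Bool × ((↥S) × Option (Fin (p.length + 1))) :=
    fun i j => ((B.run (φ i x), B.run (φ j x)),
      (if (φ i x).height ≤ (φ j x).height then true else false), dat i j) with hcolf
  obtain ⟨g, hg, c, hcol⟩ := ramsey_pairs colf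
  -- B-runs are constant along g
  have hBconst : ∀ n, B.run (φ (g n) x) = c.1.1 := by
    intro n
    have h1 : colf (g n) (g (n + 1)) = c := hcol n (n + 1) (by omega)
    exact congrArg (fun z => z.1.1) h1
  have hBru : ∀ n m, B.run (φ (g n) x) = B.run (φ (g m) x) := by
    intro n m; rw [hBconst n, hBconst m]
  -- heights are monotone along g
  have hhgtb : ∀ i j, i < j → ((if (φ (g i) x).height ≤ (φ (g j) x).height then true else false) = c.2.1) :=
    fun i j hij => congrArg (fun z => z.2.1) (hcol i j hij)
  have hhgt : ∀ i j, i < j → (φ (g i) x).height ≤ (φ (g j) x).height := by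
    intro i j hij
    by_cases hc2 : c.2.1 = true
    · have := hhgtb i j hij
      rw [hc2] at this
      by_contra hcon
      rw [if_neg hcon] at this
      simp at this
    · exfalso
      have hdesc : ∀ n, (φ (g (n + 1)) x).height < (φ (g n) x).height := by
        intro n
        have := hhgtb n (n + 1) (by omega)
        by_contra hcon
        push_neg at hcon
        rw [if_pos hcon] at this
        exact hc2 this.symm
      have hbnd : ∀ n, (φ (g n) x).height + n ≤ (φ (g 0) x).height := by
        intro n
        induction n with
        | zero => omega
        | succ n ih => have := hdesc n; omega
      have := hbnd ((φ (g 0) x).height + 1)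
      omega
  -- all pairs are in the rest language
  have hgne : ∀ i j, i < j → φ (g i) x ≠ φ (g j) x :=
    fun i j hij => hdist (g i) (g j) (Nat.ne_of_lt (hg hij))
  have hP3 : ∀ i j, i < j → P (g i) (g j) := by
    intro i j hij
    exact hPnotS (g i) (g j) (hgne i j hij) (hTL (g i) (g j) (hBru j i))
  have Pab : P (g 0) (g 1) := hP3 0 1 (by omega)
  have Pad : P (g 0) (g 2) := hP3 0 2 (by omega)
  have Pbd : P (g 1) (g 2) := hP3 1 2 (by omega)
  -- the common witness term s' and datum
  have hdc : ∀ i j, i < j → dat (g i) (g j) = c.2.2 :=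
    fun i j hij => congrArg (fun z => z.2.2) (hcol i j hij)
  have hdab : dat' (g 0) (g 1) Pab = c.2.2 := by
    rw [← hdats _ _ Pab]; exact hdc 0 1 (by omega)
  have hdad : dat' (g 0) (g 2) Pad = c.2.2 := by
    rw [← hdats _ _ Pad]; exact hdc 0 2 (by omega)
  have hdbd : dat' (g 1) (g 2) Pbd = c.2.2 := by
    rw [← hdats _ _ Pbd]; exact hdc 1 2 (by omega)
  set s' : Term F ar V := (c.2.2.1 : Term F ar V) with hs'def
  have hs'S : (c.2.2.1 : ↥S).val ∈ S := (c.2.2.1 : ↥S).prop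
  have hs'ne : s' ≠ s := by
    have := hdne (g 0) (g 1) Pab
    rwa [hdab] at this
  set ψab : V → GTerm F ar := eψ (g 0) (g 1) Pab with hψabdef
  set ψad : V → GTerm F ar := eψ (g 0) (g 2) Pad with hψaddef
  set ψbd : V → GTerm F ar := eψ (g 1) (g 2) Pbd with hψbddef
  have heqab : T (g 0) (g 1) = Term.subst ψab s' := by
    have := hdeq (g 0) (g 1) Pab; rwa [hdab] at this
  have heqad : T (g 0) (g 2) = Term.subst ψad s' := by
    have := hdeq (g 0) (g 2) Pad; rwa [hdad] at this
  have heqbd : T (g 1) (g 2) = Term.subst ψbd s' := by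
    have := hdeq (g 1) (g 2) Pbd; rwa [hdbd] at this
  have hsolab : R.IsSolution ψab := hdsol (g 0) (g 1) Pab
  have hsolad : R.IsSolution ψad := hdsol (g 0) (g 2) Pad
  have hsolbd : R.IsSolution ψbd := hdsol (g 1) (g 2) Pbd
  have hs'mem : s' ∈ (↑S : Set (Term F ar V)) \ {s} := ⟨Finset.mem_coe.mpr hs'S, hs'ne⟩
  rcases hopt : c.2.2.2 with _ | k
  · -- CASE A : p is a non-variable position of s'
    obtain ⟨f₀, ts₀, hw⟩ := by
      have := hdcase1 (g 0) (g 1) Pab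
      rw [hdab, hopt] at this
      exact this rfl
    set w : Term F ar V := Term.app f₀ ts₀ with hwdef
    -- the three decompositions of u-values
    have hub : φ (g 1) x = Term.subst ψab w := by
      have h1 : (T (g 0) (g 1)).sub p = some (Term.subst ψab w) := by
        rw [heqab]; exact Term.subst_sub p s' w hw
      rw [hTsubp] at h1
      exact Option.some_inj.mp h1
    have hud1 : φ (g 2) x = Term.subst ψad w := by
      have h1 : (T (g 0) (g 2)).sub p = some (Term.subst ψad w) := by
        rw [heqad]; exact Term.subst_sub p s' w hw
      rw [hTsubp] at h1
      exact Option.some_inj.mp h1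
    have hud2 : φ (g 2) x = Term.subst ψbd w := by
      have h1 : (T (g 1) (g 2)).sub p = some (Term.subst ψbd w) := by
        rw [heqbd]; exact Term.subst_sub p s' w hw
      rw [hTsubp] at h1
      exact Option.some_inj.mp h1
    -- incomparability of p with variable occurrences not below p
    have hq₀incomp : ∀ z q₀, s'.sub q₀ = some (Term.var z) → ¬ p <+: q₀ →
        ¬ q₀ <+: p := by
      intro z q₀ hq₀ _ hqp
      have := Term.var_prefix q₀ p s' z w hq₀ hw hqp
      subst this
      rw [hq₀] at hw
      simp [hwdef] at hw
    have hval : ∀ (n m : ℕ) (hP' : P (g n) (g m)) (ψ' : V → GTerm F ar),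
        T (g n) (g m) = Term.subst ψ' s' →
        ∀ z q₀, s'.sub q₀ = some (Term.var z) → ¬ p <+: q₀ →
        some (ψ' z) = (Term.subst (φ (g n)) s).sub q₀ := by
      intro n m hP' ψ' hEq' z q₀ hq₀ hnp
      have ha : (T (g n) (g m)).sub q₀ = some (ψ' z) := by
        rw [hEq']; exact Term.subst_sub q₀ s' _ hq₀
      rw [← ha]
      exact Term.repl_sub_of_incomp p q₀ (Term.subst (φ (g n)) s) (φ (g m) x) hnp
        (hq₀incomp z q₀ hq₀ hnp)
    have hout1 : ∀ z q₀, s'.sub q₀ = some (Term.var z) → ¬ p <+: q₀ →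
        ψab z = ψad z := by
      intro z q₀ hq₀ hnp
      have e1 := hval 0 1 Pab ψab heqab z q₀ hq₀ hnp
      have e2 := hval 0 2 Pad ψad heqad z q₀ hq₀ hnp
      rw [← e2] at e1
      exact Option.some_inj.mp e1
    have hout2 : ∀ z ρ, w.sub ρ = some (Term.var z) → ψad z = ψbd z := by
      intro z ρ hρ
      have e1 : (Term.subst ψad w).sub ρ = some (ψad z) := Term.subst_sub ρ w _ hρ
      have e2 : (Term.subst ψbd w).sub ρ = some (ψbd z) := Term.subst_sub ρ w _ hρ
      rw [← hud1] at e1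
      rw [← hud2] at e2
      rw [e1] at e2
      exact Option.some_inj.mp e2
    -- the hybrid substitution
    set Zo : V → Prop := fun z => ∀ q₀, s'.sub q₀ = some (Term.var z) → p <+: q₀ with hZo
    set ψstar : V → GTerm F ar := fun z => if Zo z then ψab z else ψbd z with hψstar
    have hwstar : Term.subst ψstar w = φ (g 1) x := by
      rw [hub]
      apply Term.subst_congr
      intro z ρ hρ
      by_cases hz : Zo z
      · simp only [hψstar, if_pos hz]
      · simp only [hψstar, if_neg hz]
        simp only [hZo, not_forall] at hz
        obtain ⟨q₀, hq₀, hnp⟩ := hz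
        rw [← hout2 z ρ hρ, ← hout1 z q₀ hq₀ hnp]
    have hrepl : Term.subst ψstar s' = (Term.subst ψbd s').repl p (Term.subst ψstar w) := by
      apply Term.subst_eq_repl p s' w hw
      intro z hz q₀ hq₀
      by_cases hzo : Zo z
      · exact hzo q₀ hq₀
      · exfalso
        apply hz
        simp only [hψstar, if_neg hzo]
    have hfinal : Term.subst ψstar s' = Term.subst (φ (g 1)) s := by
      rw [hrepl, hwstar, ← heqbd]
      show ((Term.subst (φ (g 1)) s).repl p (φ (g 2) x)).repl p (φ (g 1) x) = _
      rw [Term.repl_repl]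
      exact Term.repl_self p _ _ (htp (g 1))
    have hsolstar : R.IsSolution ψstar := by
      constructor
      · intro z
        by_cases hz : Zo z
        · simp only [hψstar, if_pos hz]; exact hsolab.1 z
        · simp only [hψstar, if_neg hz]; exact hsolbd.1 z
      · intro z hzW
        by_cases hz : Zo z
        · simp only [hψstar, if_pos hz]; exact hsolab.2 z hzW
        · simp only [hψstar, if_neg hz]; exact hsolbd.2 z hzW
    exact hnotin (g 1) ⟨s', hs'mem, ψstar, hsolstar, hfinal.symm⟩
  · -- CASE B : p is below a variable position p₀ of s'
    set p₀ : List ℕ := p.take k.val with hp₀def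
    set r : List ℕ := p.drop k.val with hrdef
    have hp₀r : p₀ ++ r = p := List.take_append_drop k.val p
    obtain ⟨y, hy⟩ := by
      have := hdcase2 (g 0) (g 1) Pab k
      rw [hdab, hopt] at this
      exact this rfl
    -- hy : s'.sub p₀ = some (Term.var y)
    have hp₀p : p₀ <+: p := ⟨r, hp₀r⟩
    -- w₀ : the subterm of t (g 0) at p₀
    obtain ⟨w₀, hw₀, hw₀r⟩ : ∃ w₀, (Term.subst (φ (g 0)) s).sub p₀ = some w₀ ∧
        w₀.sub r = some (φ (g 0) x) := by
      have h1 := htp (g 0)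
      rw [← hp₀r, Term.sub_append] at h1
      cases hcc : (Term.subst (φ (g 0)) s).sub p₀ with
      | none => rw [hcc] at h1; simp at h1
      | some w₀ => rw [hcc] at h1; exact ⟨w₀, rfl, h1⟩
    -- value of each ψ at y
    have hψy : ∀ (m : ℕ) (hP' : P (g 0) (g m)) (ψ' : V → GTerm F ar),
        T (g 0) (g m) = Term.subst ψ' s' → ψ' y = w₀.repl r (φ (g m) x) := by
      intro m hP' ψ' hEq'
      have h1 : (T (g 0) (g m)).sub p₀ = some (ψ' y) := by
        rw [hEq']; exact Term.subst_sub p₀ s' _ hy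
      have h2 : T (g 0) (g m) = (Term.subst (φ (g 0)) s).repl p₀ (w₀.repl r (φ (g m) x)) := by
        show (Term.subst (φ (g 0)) s).repl p (φ (g m) x) = _
        rw [← hp₀r]
        exact Term.repl_append p₀ _ _ r _ hw₀
      rw [h2, Term.sub_repl p₀ _ w₀ _ hw₀] at h1
      exact (Option.some_inj.mp h1).symm
    have hψaby : ψab y = w₀.repl r (φ (g 1) x) := hψy 1 Pab ψab heqab
    have hψady : ψad y = w₀.repl r (φ (g 2) x) := hψy 2 Pad ψad heqad
    by_cases hrep : ∃ q₀, q₀ ≠ p₀ ∧ s'.sub q₀ = some (Term.var y)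
    · -- y occurs at least twice in s' : contradiction with distinctness
      obtain ⟨q₀, hq₀ne, hq₀⟩ := hrep
      have hq₀p₀ : ¬ q₀ <+: p₀ ∧ ¬ p₀ <+: q₀ := by
        constructor
        · intro hpre; exact hq₀ne (Term.var_prefix q₀ p₀ s' y _ hq₀ hy hpre)
        · intro hpre; exact hq₀ne (Term.var_prefix p₀ q₀ s' y _ hy hq₀ hpre).symm
      have hq₀incp : ¬ p <+: q₀ ∧ ¬ q₀ <+: p := by
        constructor
        · intro hpre; exact hq₀p₀.2 (hp₀p.trans hpre)
        · intro hpre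
          rcases List.prefix_or_prefix_of_prefix hpre hp₀p with h1 | h1
          · exact hq₀p₀.1 h1
          · exact hq₀p₀.2 h1
      have hval2 : ∀ (m : ℕ) (hP' : P (g 0) (g m)) (ψ' : V → GTerm F ar),
          T (g 0) (g m) = Term.subst ψ' s' →
          some (ψ' y) = (Term.subst (φ (g 0)) s).sub q₀ := by
        intro m hP' ψ' hEq'
        have ha : (T (g 0) (g m)).sub q₀ = some (ψ' y) := by
          rw [hEq']; exact Term.subst_sub q₀ s' _ hq₀
        rw [← ha]
        exact Term.repl_sub_of_incomp p q₀ (Term.subst (φ (g 0)) s) (φ (g m) x)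
          hq₀incp.1 hq₀incp.2
      have e1 := hval2 1 Pab ψab heqab
      have e2 := hval2 2 Pad ψad heqad
      rw [← e2] at e1
      have e3 : ψab y = ψad y := Option.some_inj.mp e1
      rw [hψaby, hψady] at e3
      have e4 : (w₀.repl r (φ (g 1) x)).sub r = some (φ (g 1) x) :=
        Term.sub_repl r w₀ _ _ hw₀r
      have e5 : (w₀.repl r (φ (g 2) x)).sub r = some (φ (g 2) x) :=
        Term.sub_repl r w₀ _ _ hw₀r
      rw [e3, e5] at e4
      exact hgne 1 2 (by omega) (Option.some_inj.mp e4).symm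
    · -- y occurs exactly once in s' : swap back and contradict hnotin (g 0)
      push_neg at hrep
      have huniq : ∀ q₀, s'.sub q₀ = some (Term.var y) → q₀ = p₀ := by
        intro q₀ hq₀
        by_contra hne
        exact (hrep q₀ hne) hq₀
      -- the replaced value is a valid solution value
      have hArun : R.A.run w₀ = some (R.C y) := by
        have h1 := hsolab.1 y
        rw [hψaby] at h1
        have h2 : R.A.run (w₀.repl r (φ (g 1) x)) = R.A.run w₀ :=
          DTA.run_repl R.A r w₀ (φ (g 0) x) (φ (g 1) x) hw₀r
            (by rw [hAu (g 0), hAu (g 1)])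
        rw [h2] at h1
        exact h1
      have hhw₀ : y ∈ R.W → w₀.height ≤ R.hgt := by
        intro hyW
        have h1 := hsolab.2 y hyW
        have h2 : (ψab y).repl r (φ (g 0) x) = w₀ := by
          rw [hψaby, Term.repl_repl]
          exact Term.repl_self r w₀ _ hw₀r
        have h3 : ((ψab y).repl r (φ (g 0) x)).height ≤ (ψab y).height := by
          apply Term.height_repl_le r _ (φ (g 1) x) _
          · rw [hψaby]; exact Term.sub_repl r w₀ _ _ hw₀r
          · exact hhgt 0 1 (by omega)
        rw [h2] at h3
        omega
      set ψ' : V → GTerm F ar := Function.update ψab y w₀ with hψ'def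
      have hsolψ' : R.IsSolution ψ' := by
        constructor
        · intro z
          by_cases hz : z = y
          · subst hz; simp only [hψ'def, Function.update_self]; exact hArun
          · simp only [hψ'def, Function.update_of_ne hz]; exact hsolab.1 z
        · intro z hzW
          by_cases hz : z = y
          · subst hz; simp only [hψ'def, Function.update_self]; exact hhw₀ hzW
          · simp only [hψ'def, Function.update_of_ne hz]; exact hsolab.2 z hzW
      have hfinal : Term.subst ψ' s' = Term.subst (φ (g 0)) s := by
        rw [hψ'def, Term.subst_update p₀ s' hy huniq, ← heqab]
        show ((Term.subst (φ (g 0)) s).repl p (φ (g 1) x)).repl p₀ w₀ = _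
        rw [← hp₀r, Term.repl_append p₀ _ w₀ r _ hw₀, Term.repl_repl]
        exact Term.repl_self p₀ _ _ hw₀
      exact hnotin (g 0) ⟨s', hs'mem, ψ', hsolψ', hfinal.symm⟩


end RITRC
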